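/- Let V be a finite-dimensional representation of sl₂(ℂ) with standard basis (e,h,f), let a, b be integers, and let v ∈ V be a weight vector of weight b - a (i.e. h·v = (b-a)·v). Then the following are equivalent: (1) e^m · v = 0 for all integers m > a; (2) f^m · v = 0 for all integers m > b. -/

import Mathlib

open Module

private lemma weight_pow {V : Type*} [AddCommGroup V] [Module ℂ V]
    (A H : Module.End ℂ V) (c μ : ℂ) (hc : ⁅H, A⁆ = c • A) (v : V) (hv : H v = μ • v) :
    ∀ j : ℕ, H ((A ^ j) v) = (μ + j * c) • (A ^ j) v := by
  intro j
  induction j with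
  | zero => simpa using hv
  | succ j ih =>
    have hHA : H * A = A * H + c • A := by
      have : H * A - A * H = c • A := hc
      linear_combination (norm := module) this
    have : (A ^ (j+1)) v = A ((A ^ j) v) := by rw [pow_succ']; rfl
    rw [this]
    have := congrArg (fun (T : Module.End ℂ V) => T ((A ^ j) v)) hHA
    simp only [Module.End.mul_apply, LinearMap.add_apply, LinearMap.smul_apply] at this
    rw [show H (A ((A^j) v)) = A (H ((A^j) v)) + c • A ((A^j) v) from this, ih]
    simp only [map_smul]
    push_cast
    module

private lemma exists_pow_eq_zero {V : Type*} [AddCommGroup V] [Module ℂ V]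
    [FiniteDimensional ℂ V]
    (A H : Module.End ℂ V) (c μ : ℂ) (hc0 : c ≠ 0) (hc : ⁅H, A⁆ = c • A)
    (v : V) (hv : H v = μ • v) : ∃ N : ℕ, (A ^ N) v = 0 := by
  by_contra hcon
  push_neg at hcon
  have hinj : Function.Injective (fun j : ℕ => μ + (j : ℂ) * c) := by
    intro i j hij
    simp only at hij
    have : (i : ℂ) = j := by
      exact mul_right_cancel₀ hc0 (add_left_cancel hij)
    exact_mod_cast this
  have hli : LinearIndependent ℂ (fun j : ℕ => (A ^ j) v) := by
    apply H.eigenvectors_linearIndependent' (fun j : ℕ => μ + (j : ℂ) * c) hinj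
    intro j
    rw [Module.End.hasEigenvector_iff, Module.End.mem_eigenspace_iff]
    exact ⟨weight_pow A H c μ hc v hv j, hcon j⟩
  have h0 := hli.finrank_eq_zero_of_infinite
  rw [Module.finrank_zero_iff] at h0
  exact hcon 0 (Subsingleton.elim _ _)


private lemma helper {V : Type*} [AddCommGroup V] [Module ℂ V]
    (E H F : Module.End ℂ V)
    (hHE : ⁅H, E⁆ = (2 : ℂ) • E) (hEF : ⁅E, F⁆ = H) :
    ∀ (m : ℕ) (w : V) (ν : ℂ), H w = ν • w → (E ^ m) w = 0 → (E ^ (m + 1)) (F w) = 0 := by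
  intro m
  induction m with
  | zero =>
    intro w ν hw h0
    have : w = 0 := by simpa using h0
    simp [this]
  | succ m ih =>
    intro w ν hw h0
    have hHEw : H (E w) = E (H w) + (2 : ℂ) • E w := by
      have hHE' := hHE
      rw [Ring.lie_def] at hHE'
      have := congrArg (fun (T : Module.End ℂ V) => T w) hHE'
      simp only [LinearMap.sub_apply, Module.End.mul_apply, LinearMap.smul_apply] at this
      linear_combination (norm := module) this
    have hEw : H (E w) = (ν + 2) • (E w) := by
      rw [hHEw, hw, map_smul]; module
    have h1 : (E ^ m) (E w) = 0 := by
      rw [show (E ^ m) (E w) = (E ^ (m + 1)) w by rw [pow_succ]; rfl, h0]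
    have h2 := ih (E w) (ν + 2) hEw h1
    have hEFw : E (F w) = F (E w) + ν • w := by
      have hEF' := hEF
      rw [Ring.lie_def] at hEF'
      have := congrArg (fun (T : Module.End ℂ V) => T w) hEF'
      simp only [LinearMap.sub_apply, Module.End.mul_apply] at this
      rw [← hw]
      linear_combination (norm := module) this
    calc (E ^ (m + 1 + 1)) (F w) = (E ^ (m + 1)) (E (F w)) := by rw [pow_succ]; rfl
      _ = (E ^ (m + 1)) (F (E w) + ν • w) := by rw [hEFw]
      _ = (E ^ (m + 1)) (F (E w)) + ν • (E ^ (m + 1)) w := by rw [map_add, map_smul]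
      _ = 0 := by rw [h2, h0, smul_zero, add_zero]

private lemma key {V : Type*} [AddCommGroup V] [Module ℂ V] [FiniteDimensional ℂ V]
    (E H F : Module.End ℂ V)
    (hHE : ⁅H, E⁆ = (2 : ℂ) • E) (hHF : ⁅H, F⁆ = (-2 : ℂ) • F) (hEF : ⁅E, F⁆ = H)
    (a b : ℤ) (v : V) (hv : H v = (((b - a : ℤ) : ℂ)) • v)
    (hE : ∀ m : ℕ, a < (m : ℤ) → (E ^ m) v = 0) :
    ∀ m : ℕ, b < (m : ℤ) → (F ^ m) v = 0 := by
  classical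
  letI : LieRing (Module.End ℂ V) := LieRing.ofAssociativeRing
  by_cases hv0 : v = 0
  · intro m _; simp [hv0]
  by_cases hH0 : H = 0
  · -- degenerate case: H = 0 forces E = F = 0 and a = b
    have hF0 : F = 0 := by
      have h2 : (0 : Module.End ℂ V) = (-2 : ℂ) • F := by rw [← hHF, hH0, zero_lie]
      have := h2.symm
      rw [smul_eq_zero] at this
      simpa using this
    have hab : a = b := by
      have : (((b - a : ℤ) : ℂ)) • v = 0 := by rw [← hv, hH0]; rfl
      rw [smul_eq_zero] at this
      rcases this with h | h
      · have : (b - a : ℤ) = 0 := by exact_mod_cast h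
        omega
      · exact absurd h hv0
    have ha : 0 ≤ a := by
      by_contra hc
      exact hv0 (by simpa using hE 0 (by omega))
    intro m hm
    have hm1 : m ≠ 0 := by omega
    rw [hF0, zero_pow hm1]; rfl
  -- main case
  have ha : 0 ≤ a := by
    by_contra hc
    exact hv0 (by simpa using hE 0 (by omega))
  have hex : ∃ N : ℕ, (F ^ N) v = 0 :=
    exists_pow_eq_zero F H (-2) _ (by norm_num) hHF v hv
  set N := Nat.find hex with hNdef
  have hNzero : (F ^ N) v = 0 := Nat.find_spec hex
  have hNpos : N ≠ 0 := by
    intro h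
    apply hv0
    simpa [h] using hNzero
  obtain ⟨M, hM⟩ : ∃ M, N = M + 1 := ⟨N - 1, by omega⟩
  set u := (F ^ M) v with hu
  have hune : u ≠ 0 := Nat.find_min hex (by omega)
  have hFu : F u = 0 := by
    rw [hu, show F ((F ^ M) v) = (F ^ (M + 1)) v by rw [pow_succ']; rfl, ← hM, hNzero]
  have hHu : H u = ((((b - a : ℤ) : ℂ)) + M * (-2)) • u :=
    weight_pow F H (-2) _ hHF v hv M
  -- the sl₂ triple (-H, F, E) with primitive vector u
  have t' : IsSl2Triple (-H) F E := by
    refine ⟨by simpa using hH0, ?_, ?_, ?_⟩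
    · rw [← lie_skew, hEF]
    · rw [neg_lie, hHF]; module
    · rw [neg_lie, hHE]; module
  have P : t'.HasPrimitiveVectorWith u (2 * M - ((b - a : ℤ) : ℂ)) := by
    refine ⟨hune, ?_, hFu⟩
    show (-H) u = _
    rw [LinearMap.neg_apply, hHu]
    module
  obtain ⟨n, hn⟩ := P.exists_nat
  set K := a.toNat + 1 with hK
  have hEstring : ∀ j : ℕ, (E ^ (K + j)) ((F ^ j) v) = 0 := by
    intro j
    induction j with
    | zero =>
      simpa using hE K (by omega)
    | succ j ih =>
      have hw : H ((F ^ j) v) = ((((b - a : ℤ) : ℂ)) + j * (-2)) • (F ^ j) v :=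
        weight_pow F H (-2) _ hHF v hv j
      have := helper E H F hHE hEF (K + j) ((F ^ j) v) _ hw ih
      rw [show (F ^ (j + 1)) v = F ((F ^ j) v) by rw [pow_succ']; rfl,
        show K + (j + 1) = K + j + 1 by omega]
      exact this
  have hEu : (E ^ (K + M)) u = 0 := hEstring M
  have hnb : n < K + M := by
    by_contra hc
    push_neg at hc
    have := P.pow_toEnd_f_ne_zero_of_eq_nat hn hc
    rw [show LieModule.toEnd ℂ (Module.End ℂ V) V E = E from rfl] at this
    exact this hEu
  have hnval : (n : ℤ) = 2 * M - (b - a) := by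
    have : ((2 * M - (b - a) : ℤ) : ℂ) = ((n : ℤ) : ℂ) := by push_cast; push_cast at hn; linear_combination hn
    exact_mod_cast this.symm
  have hNb : (N : ℤ) ≤ b + 1 := by
    have hKa : (K : ℤ) = a + 1 := by omega
    omega
  intro m hm
  have hmN : N ≤ m := by omega
  rw [show m = (m - N) + N by omega, pow_add, Module.End.mul_apply, hNzero, map_zero]

/-- Let `V` be a finite-dimensional complex representation of `sl₂(ℂ)`, given by endomorphisms
`E, H, F` satisfying the standard commutation relations. If `v` is a weight vector of weight
`b - a` (with `a b : ℤ`), then `E^m · v = 0` for all integers `m > a` if and only if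
`F^m · v = 0` for all integers `m > b`. -/
theorem stmt_5 {V : Type*} [AddCommGroup V] [Module ℂ V] [FiniteDimensional ℂ V]
    (E H F : Module.End ℂ V)
    (hHE : ⁅H, E⁆ = (2 : ℂ) • E) (hHF : ⁅H, F⁆ = (-2 : ℂ) • F) (hEF : ⁅E, F⁆ = H)
    (a b : ℤ) (v : V) (hv : H v = (((b - a : ℤ) : ℂ)) • v) :
    (∀ m : ℕ, a < (m : ℤ) → (E ^ m) v = 0) ↔ (∀ m : ℕ, b < (m : ℤ) → (F ^ m) v = 0) := by
  constructor
  · exact key E H F hHE hHF hEF a b v hv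
  · intro hF
    letI : LieRing (Module.End ℂ V) := LieRing.ofAssociativeRing
    refine key F (-H) E ?_ ?_ ?_ b a v ?_ hF
    · rw [neg_lie, hHF]; module
    · rw [neg_lie, hHE]; module
    · rw [← lie_skew, hEF]
    · rw [LinearMap.neg_apply, hv]
      push_cast
      module
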